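/- Let A be a commutative ring, p a prime number and d ∈ A. Assume that p and d are nonzerodivisors on A, that A/dA is p-torsion-free, and that A is p-adically separated, i.e. ⋂_{n≥0} p^n A = 0 (this holds in particular when A is classically p-adically complete). Then the localization A[1/d] is p-adically separated: ⋂_{n≥0} p^n · A[1/d] = 0. -/

import Mathlib

/-!
Let A be a commutative ring, p a prime and d ∈ A.  Assume p and d are
nonzerodivisors on A, that A/dA is p-torsion-free, and that A is p-adically
separated (⋂ₙ pⁿA = 0).  Then the localization A[1/d] is p-adically separated:
⋂ₙ pⁿ·A[1/d] = 0.
-/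

theorem localization_away_padically_separated
    {A : Type*} [CommRing A] (p : ℕ) (hp : p.Prime) (d : A)
    (hpA : (p : A) ∈ nonZeroDivisors A) (hdA : d ∈ nonZeroDivisors A)
    (htf : ∀ x : A, (p : A) * x ∈ Ideal.span {d} → x ∈ Ideal.span {d})
    (hsep : (⨅ n : ℕ, Ideal.span {(p : A) ^ n}) = ⊥) :
    (⨅ n : ℕ, Ideal.span {(p : Localization.Away d) ^ n}) = ⊥ := by
  -- Step 1 : A/pⁿ is d-torsion-free (swap of the hypothesis htf)
  have hd : ∀ (n : ℕ) (a : A), d * a ∈ Ideal.span {(p : A) ^ n} →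
      a ∈ Ideal.span {(p : A) ^ n} := by
    intro n
    induction n with
    | zero =>
      intro a _
      simpa using Ideal.mem_span_singleton.mpr (one_dvd a)
    | succ n ih =>
      intro a ha
      rw [Ideal.mem_span_singleton] at ha ⊢
      obtain ⟨b, hb⟩ := ha
      -- d * a = p^(n+1) * b = p * (pⁿ * b), so p * (pⁿ b) ∈ (d)
      have h1 : (p : A) * ((p : A) ^ n * b) ∈ Ideal.span {d} := by
        rw [Ideal.mem_span_singleton]
        exact ⟨a, by linear_combination -hb⟩
      obtain ⟨c, hc⟩ := Ideal.mem_span_singleton.mp (htf _ h1)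
      -- pⁿ * b = d * c
      have hac : a = (p : A) * c := by
        have : d * a = d * ((p : A) * c) := by linear_combination hb + (p : A) * hc
        exact (mul_cancel_left_mem_nonZeroDivisors hdA).mp this
      -- d * c ∈ (pⁿ)
      have hdc : d * c ∈ Ideal.span {(p : A) ^ n} := by
        rw [Ideal.mem_span_singleton]
        exact ⟨b, by linear_combination -hc⟩
      obtain ⟨e, he⟩ := Ideal.mem_span_singleton.mp (ih c hdc)
      exact ⟨e, by rw [hac, he]; ring⟩
  have hdpow : ∀ (m n : ℕ) (a : A), d ^ m * a ∈ Ideal.span {(p : A) ^ n} →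
      a ∈ Ideal.span {(p : A) ^ n} := by
    intro m
    induction m with
    | zero => intro n a ha; simpa using ha
    | succ m ih =>
      intro n a ha
      refine ih n a (hd n (d ^ m * a) ?_)
      have : d * (d ^ m * a) = d ^ (m + 1) * a := by ring
      rwa [this]
  -- Step 2 : main argument
  set L := Localization.Away d
  have hinj : Function.Injective (algebraMap A L) :=
    IsLocalization.injective L (Submonoid.powers_le.mpr hdA)
  rw [eq_bot_iff]
  intro x hx
  rw [Submodule.mem_bot]
  obtain ⟨⟨a, s⟩, hxe⟩ := IsLocalization.mk'_surjective (S := L) (Submonoid.powers d) x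
  obtain rfl : IsLocalization.mk' L a s = x := hxe
  obtain ⟨k, hk⟩ := s.2
  -- it suffices to show a = 0
  suffices ha : a = 0 by
    rw [ha, IsLocalization.mk'_zero]
  -- show a ∈ ⋂ pⁿA
  have key : ∀ n : ℕ, a ∈ Ideal.span {(p : A) ^ n} := by
    intro n
    simp only [Ideal.mem_iInf] at hx
    have hxn : IsLocalization.mk' L a s ∈ Ideal.span {(p : L) ^ n} := hx n
    obtain ⟨y, hy⟩ := Ideal.mem_span_singleton.mp hxn
    obtain ⟨⟨c, t⟩, hye⟩ := IsLocalization.mk'_surjective (S := L) (Submonoid.powers d) y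
    obtain rfl : IsLocalization.mk' L c t = y := hye
    obtain ⟨m, hm⟩ := t.2
    have e1 : algebraMap A L a = IsLocalization.mk' L a s * algebraMap A L (s : A) :=
      (IsLocalization.mk'_spec L a s).symm
    have e2 : algebraMap A L c = IsLocalization.mk' L c t * algebraMap A L (t : A) :=
      (IsLocalization.mk'_spec L c t).symm
    have e3 : algebraMap A L (a * (t : A)) =
        algebraMap A L ((p : A) ^ n * c * (s : A)) := by
      rw [map_mul, e1, map_mul, map_mul]
      push_cast
      rw [hy, e2]
      ring
    have e4 : a * (t : A) = (p : A) ^ n * c * (s : A) := hinj e3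
    -- d ^ m * a ∈ (pⁿ)
    refine hdpow m n a ?_
    rw [Ideal.mem_span_singleton]
    refine ⟨c * (s : A), ?_⟩
    simp only [← hm] at e4
    linear_combination e4
  have : a ∈ (⊥ : Ideal A) := by
    rw [← hsep]
    simpa only [Ideal.mem_iInf] using key
  simpa using this
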